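/- Let n be a positive integer, ρ ∈ ℝ, ε ≠ 0, and δ ∈ ℝ. Suppose u : (0,∞) × ℝ → ℝ is C³ and satisfies u_t + uⁿ u_x + ε t^ρ u_{xxx} = 0 for all t > 0 and x ∈ ℝ. Then the function v(t,x) = e^((ρ−2)δ) u( e^(−3nδ) t, e^(−(ρ+1)nδ) x ) also satisfies v_t + vⁿ v_x + ε t^ρ v_{xxx} = 0 for all t > 0 and x ∈ ℝ. -/

import Mathlib

/-- Partial derivative in `t` of `u = u(t,x)`. -/
noncomputable def pt (u : ℝ → ℝ → ℝ) (t x : ℝ) : ℝ := deriv (fun s => u s x) t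
/-- Partial derivative in `x` of `u = u(t,x)`. -/
noncomputable def px (u : ℝ → ℝ → ℝ) (t x : ℝ) : ℝ := deriv (fun y => u t y) x
/-- Third partial derivative in `x` of `u = u(t,x)`. -/
noncomputable def pxxx (u : ℝ → ℝ → ℝ) (t x : ℝ) : ℝ := iteratedDeriv 3 (fun y => u t y) x
/-- Case 1 of Table 1: the one-parameter scaling group generated by
`3nt∂_t + (ρ+1)n x∂_x + (ρ−2)u∂_u` maps solutions of
`u_t + uⁿ u_x + ε t^ρ u_{xxx} = 0` (for `t > 0`) to solutions. -/
theorem stmt_4 (n : ℕ) (hn : 0 < n) (ρ ε : ℝ) (hε : ε ≠ 0) (δ : ℝ)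
    (u : ℝ → ℝ → ℝ)
    (hu : ContDiffOn ℝ 3 (fun p : ℝ × ℝ => u p.1 p.2) {p : ℝ × ℝ | 0 < p.1})
    (hpde : ∀ t, 0 < t → ∀ x : ℝ,
      pt u t x + (u t x) ^ n * px u t x + ε * t ^ ρ * pxxx u t x = 0)
    (v : ℝ → ℝ → ℝ)
    (hv : ∀ t x, v t x = Real.exp ((ρ - 2) * δ)
      * u (Real.exp (-3 * (n:ℝ) * δ) * t) (Real.exp (-(ρ + 1) * (n:ℝ) * δ) * x)) :
    ∀ t, 0 < t → ∀ x : ℝ,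
      pt v t x + (v t x) ^ n * px v t x + ε * t ^ ρ * pxxx v t x = 0 := by
  intro t ht x
  set A := Real.exp ((ρ - 2) * δ) with hA
  set B := Real.exp (-3 * (n:ℝ) * δ) with hB
  set C := Real.exp (-(ρ + 1) * (n:ℝ) * δ) with hC
  have hBpos : 0 < B := Real.exp_pos _
  set a := B * t with ha
  set b := C * x with hb
  have hapos : 0 < a := mul_pos hBpos ht
  have hopen : IsOpen {p : ℝ × ℝ | 0 < p.1} := isOpen_lt continuous_const continuous_fst
  have hmem : (a, b) ∈ {p : ℝ × ℝ | 0 < p.1} := hapos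
  -- differentiability at (a,b)
  have hFd : DifferentiableAt ℝ (fun p : ℝ × ℝ => u p.1 p.2) (a, b) :=
    (hu.differentiableOn (by norm_num)).differentiableAt (hopen.mem_nhds hmem)
  -- t-derivative
  have h1 : HasDerivAt (fun s => u s b) (pt u a b) a := by
    have hd : DifferentiableAt ℝ (fun s => u s b) a :=
      by have := hFd.comp a (DifferentiableAt.prodMk differentiableAt_id (differentiableAt_const b) : DifferentiableAt ℝ (fun s : ℝ => (s, b)) a); exact this
    exact hd.hasDerivAt
  have h2 : HasDerivAt (fun s : ℝ => B * s) B t := by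
    simpa using (hasDerivAt_id t).const_mul B
  have h3 : HasDerivAt (fun s => u (B * s) b) (pt u a b * B) t := by
    have := h1.comp t h2
    exact this
  have h4 : HasDerivAt (fun s => A * u (B * s) b) (A * (pt u a b * B)) t :=
    h3.const_mul A
  have ept : pt v t x = A * (pt u a b * B) := by
    have hfun : (fun s => v s x) = fun s => A * u (B * s) b := funext fun s => hv s x
    rw [pt, hfun]
    exact h4.deriv
  -- x-derivatives
  have hg : ContDiff ℝ 3 (fun y => u a y) := by
    rw [← contDiffOn_univ]
    exact hu.comp ((contDiff_const.prodMk contDiff_id).contDiffOn) (fun y _ => hapos)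
  have h5 : HasDerivAt (fun y => u a y) (px u a b) b :=
    ((hg.differentiable (by norm_num)) b).hasDerivAt
  have h6 : HasDerivAt (fun y : ℝ => C * y) C x := by
    simpa using (hasDerivAt_id x).const_mul C
  have h7 : HasDerivAt (fun y => u a (C * y)) (px u a b * C) x := by
    have := h5.comp x h6
    exact this
  have h8 : HasDerivAt (fun y => A * u a (C * y)) (A * (px u a b * C)) x :=
    h7.const_mul A
  have epx : px v t x = A * (px u a b * C) := by
    have hfun : (fun y => v t y) = fun y => A * u a (C * y) := funext fun y => hv t y
    rw [px, hfun]
    exact h8.deriv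
  -- third x-derivative
  have hg3 : ContDiff ℝ (3 : ℕ) (fun z => A * u a z) := by
    exact_mod_cast contDiff_const.mul hg
  have e1 : iteratedDeriv 3 (fun y => (fun z => A * u a z) (C * y)) =
      fun y => C ^ 3 * iteratedDeriv 3 (fun z => A * u a z) (C * y) :=
    iteratedDeriv_comp_const_mul hg3 C
  have e2 : ∀ z : ℝ, iteratedDeriv 3 (fun z => A * u a z) z
      = A * iteratedDeriv 3 (fun z => u a z) z := by
    intro z
    simp only [← iteratedDerivWithin_univ]
    exact iteratedDerivWithin_const_mul (Set.mem_univ z) uniqueDiffOn_univ A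
      (by exact_mod_cast hg.contDiffAt.contDiffWithinAt)
  have epxxx : pxxx v t x = C ^ 3 * (A * pxxx u a b) := by
    have hfun : (fun y => v t y) = fun y => (fun z => A * u a z) (C * y) :=
      funext fun y => hv t y
    rw [pxxx, hfun, congrFun e1 x, e2]
    rfl
  have hv0 : v t x = A * u a b := hv t x
  have key := hpde a hapos b
  have key1 : A ^ n * C = B := by
    rw [hA, hB, hC, ← Real.exp_nat_mul, ← Real.exp_add]
    congr 1
    ring
  have key2 : B * a ^ ρ = C ^ 3 * t ^ ρ := by
    rw [ha, Real.mul_rpow hBpos.le ht.le, hB, hC, ← Real.exp_nat_mul, ← Real.exp_mul,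
      ← mul_assoc, ← Real.exp_add]
    congr 2
    ring
  rw [ept, epx, epxxx, hv0]
  linear_combination (A * B) * key + (A * u a b ^ n * px u a b) * key1
    - (ε * A * pxxx u a b) * key2
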